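/- Let p be a prime, m ≥ 1, and let Φ : GF(2)^m → {0,…,p−1} be a map such that Φ(u) ≠ Φ(v) whenever u ≠ v and B_{t,M}(u) ∩ B_{t,M}(v) ≠ ∅ (a proper coloring of the mineral-confusability graph). Let C_t ⊆ GF(p)^n be a code with minimum Hamming distance at least 2t+1. Then C = { x ∈ GF(2)^{mn} : (Φ(x_1,…,x_m), Φ(x_{m+1},…,x_{2m}), …, Φ(x_{(n−1)m+1},…,x_{nm})) ∈ C_t } is a t-mineral-error-correcting code. -/

import Mathlib

def mineralError {n : ℕ} (t : ℕ) (x e : Fin n → ZMod 2) : Prop :=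
  (Finset.univ.filter fun i => e i ≠ 0).card ≤ t ∧
  (∀ i : Fin n, 0 < (i : ℕ) → e i ≠ 0 →
    x i ≠ x ⟨(i : ℕ) - 1, lt_of_le_of_lt (Nat.sub_le _ _) i.isLt⟩)

def mineralBall {n : ℕ} (t : ℕ) (x : Fin n → ZMod 2) : Set (Fin n → ZMod 2) :=
  {y | ∃ e, mineralError t x e ∧ y = x + e}

def mineralCorrecting {n : ℕ} (t : ℕ) (C : Finset (Fin n → ZMod 2)) : Prop :=
  ∀ x ∈ C, ∀ y ∈ C, x ≠ y → Disjoint (mineralBall t x) (mineralBall t y)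

theorem block_lt {m n : ℕ} (j : Fin n) (i : Fin m) : (j : ℕ) * m + (i : ℕ) < m * n := by
  have h1 : (j : ℕ) * m + (i : ℕ) < ((j : ℕ) + 1) * m := by
    rw [Nat.succ_mul]; exact Nat.add_lt_add_left i.isLt _
  have h2 : ((j : ℕ) + 1) * m ≤ n * m := Nat.mul_le_mul_right m j.isLt
  rw [Nat.mul_comm n m] at h2
  exact lt_of_lt_of_le h1 h2

/-- Block restriction of a word. -/
def blk {m n : ℕ} (v : Fin (m * n) → ZMod 2) (j : Fin n) : Fin m → ZMod 2 :=
  fun i => v ⟨(j : ℕ) * m + (i : ℕ), block_lt j i⟩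

lemma blk_add {m n : ℕ} (x e : Fin (m * n) → ZMod 2) (j : Fin n) :
    blk (x + e) j = blk x j + blk e j := rfl

lemma mineralError_blk {m n t : ℕ} {x e : Fin (m * n) → ZMod 2}
    (h : mineralError t x e) (j : Fin n) : mineralError t (blk x j) (blk e j) := by
  constructor
  · refine le_trans ?_ h.1
    apply Finset.card_le_card_of_injOn
      (fun i : Fin m => (⟨(j : ℕ) * m + (i : ℕ), block_lt j i⟩ : Fin (m * n)))
    · intro i hi
      simp only [Finset.mem_coe, Finset.mem_filter, Finset.mem_univ, true_and] at hi ⊢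
      exact hi
    · intro a _ b _ hab
      have h : (j : ℕ) * m + (a : ℕ) = (j : ℕ) * m + (b : ℕ) := congrArg Fin.val hab
      exact Fin.ext (by omega)
  · intro i hi hne
    have hpos : 0 < ((⟨(j : ℕ) * m + (i : ℕ), block_lt j i⟩ : Fin (m * n)) : ℕ) := by
      simp; omega
    have := h.2 ⟨(j : ℕ) * m + (i : ℕ), block_lt j i⟩ hpos hne
    have hidx : (j : ℕ) * m + (i : ℕ) - 1 = (j : ℕ) * m + ((i : ℕ) - 1) := by omega
    simpa [blk, hidx] using this

/-- Construction 2: given a proper coloring `Φ` of the mineral-confusability graph on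
`GF(2)^m` with `p` colors (`p` prime), and a code `C_t ⊆ GF(p)^n` with minimum Hamming
distance at least `2t+1`, the binary code of length `mn` consisting of all `x` whose
blockwise image under `Φ` lies in `C_t` is a `t`-mineral-error-correcting code. -/
theorem stmt15 {p m n t : ℕ} (hp : p.Prime) (hm : 1 ≤ m)
    (Φ : (Fin m → ZMod 2) → ZMod p)
    (hΦ : ∀ u v : Fin m → ZMod 2, u ≠ v →
      (mineralBall t u ∩ mineralBall t v).Nonempty → Φ u ≠ Φ v)
    (Ct : Finset (Fin n → ZMod p))
    (hdist : ∀ c ∈ Ct, ∀ d ∈ Ct, c ≠ d → 2 * t + 1 ≤ hammingDist c d) :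
    mineralCorrecting t (Finset.univ.filter fun x : Fin (m * n) → ZMod 2 =>
      (fun j : Fin n => Φ fun i : Fin m => x ⟨(j : ℕ) * m + (i : ℕ), block_lt j i⟩) ∈ Ct) := by
  intro x hx y hy hxy
  rw [Set.disjoint_left]
  rintro z ⟨e, he, rfl⟩ ⟨f, hf, hz⟩
  apply hxy
  simp only [Finset.mem_filter, Finset.mem_univ, true_and] at hx hy
  have hm0 : 0 < m := hm
  have hxy' : ∀ k : Fin (m * n), x k + e k = y k + f k := fun k => congrFun hz k
  -- blockwise colorings
  set c : Fin n → ZMod p := fun j => Φ (blk x j) with hc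
  set d : Fin n → ZMod p := fun j => Φ (blk y j) with hd
  have hcCt : c ∈ Ct := hx
  have hdCt : d ∈ Ct := hy
  -- blockwise ball intersection
  have hball : ∀ j : Fin n, blk x j + blk e j ∈ mineralBall t (blk x j) ∩ mineralBall t (blk y j) := by
    intro j
    constructor
    · exact ⟨blk e j, mineralError_blk he j, rfl⟩
    · refine ⟨blk f j, mineralError_blk hf j, ?_⟩
      funext i
      simpa [blk] using hxy' ⟨(j : ℕ) * m + (i : ℕ), block_lt j i⟩
  have key : ∀ j : Fin n, blk x j ≠ blk y j → c j ≠ d j := by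
    intro j hne
    exact hΦ _ _ hne ⟨_, hball j⟩
  -- the set of blocks where x and y differ is small
  have hcard : (Finset.univ.filter fun j : Fin n => blk x j ≠ blk y j).card ≤ 2 * t := by
    classical
    set S : Finset (Fin (m * n)) :=
      (Finset.univ.filter fun k => e k ≠ 0) ∪ (Finset.univ.filter fun k => f k ≠ 0) with hS
    have hScard : S.card ≤ 2 * t := by
      calc S.card ≤ _ + _ := Finset.card_union_le _ _
        _ ≤ t + t := Nat.add_le_add he.1 hf.1
        _ = 2 * t := by ring
    have hsub : (Finset.univ.filter fun j : Fin n => blk x j ≠ blk y j) ⊆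
        S.image (fun k : Fin (m * n) =>
          (⟨(k : ℕ) / m, Nat.div_lt_of_lt_mul k.isLt⟩ : Fin n)) := by
      intro j hj
      simp only [Finset.mem_filter, Finset.mem_univ, true_and] at hj
      by_contra hcon
      apply hj
      funext i
      set k : Fin (m * n) := ⟨(j : ℕ) * m + (i : ℕ), block_lt j i⟩ with hkdef
      have hk : k ∉ S := by
        intro hkS
        apply hcon
        rw [Finset.mem_image]
        refine ⟨k, hkS, ?_⟩
        apply Fin.ext
        show (k : ℕ) / m = (j : ℕ)
        rw [hkdef]
        simp only [Nat.mul_comm (j : ℕ) m]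
        rw [Nat.mul_add_div hm0, Nat.div_eq_of_lt i.isLt]
        omega
      rw [hS, Finset.mem_union, Finset.mem_filter, Finset.mem_filter] at hk
      push_neg at hk
      have he0 : e k = 0 := hk.1 (Finset.mem_univ _)
      have hf0 : f k = 0 := hk.2 (Finset.mem_univ _)
      have := hxy' k
      rw [he0, hf0, add_zero, add_zero] at this
      exact this
    calc _ ≤ (S.image _).card := Finset.card_le_card hsub
      _ ≤ S.card := Finset.card_image_le
      _ ≤ 2 * t := hScard
  -- c = d
  have hcd : c = d := by
    by_contra hne
    have h1 := hdist c hcCt d hdCt hne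
    have h2 : hammingDist c d ≤ 2 * t := by
      refine le_trans (Finset.card_le_card ?_) hcard
      intro j hj
      simp only [Finset.mem_filter, Finset.mem_univ, true_and] at hj ⊢
      intro hb
      refine hj ?_
      show Φ (blk x j) = Φ (blk y j)
      rw [hb]
    omega
  -- hence all blocks agree
  have hblk : ∀ j, blk x j = blk y j := by
    intro j
    by_contra hne
    exact key j hne (by rw [hcd])
  funext k
  have hmod : (k : ℕ) % m < m := Nat.mod_lt _ hm0
  have hdiv : (k : ℕ) / m < n := Nat.div_lt_of_lt_mul k.isLt
  have hb := congrFun (hblk ⟨(k : ℕ) / m, hdiv⟩) ⟨(k : ℕ) % m, hmod⟩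
  simp only [blk] at hb
  have hidx : (k : ℕ) / m * m + (k : ℕ) % m = (k : ℕ) := Nat.div_add_mod' _ _
  rw [show k = (⟨(k : ℕ) / m * m + (k : ℕ) % m, by rw [Nat.div_add_mod']; exact k.isLt⟩ : Fin (m * n)) from
    Fin.ext hidx.symm]
  exact hb
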